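/- Let x₁, x₂ be product vectors in a tensor product 𝒳₁ ⊗ ... ⊗ 𝒳ₘ of complex Euclidean spaces, with x_k = x_{k,1} ⊗ ... ⊗ x_{k,m}. If there exist nonzero scalars α₁, α₂ such that α₁x₁ + α₂x₂ is a product vector or zero, then there is at most one index j ∈ [m] for which x_{1,j} and x_{2,j} are linearly independent. -/

import Mathlib

open scoped ComplexInnerProductSpace

/-- The elementary tensor of the vectors `x j`, realized concretely in the
Euclidean space indexed by the product of the index sets. -/
def elemTensor {m : ℕ} {d : Fin m → ℕ} (x : ∀ j, EuclideanSpace ℂ (Fin (d j))) :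
    EuclideanSpace ℂ (∀ j, Fin (d j)) :=
  WithLp.toLp 2 (fun f => ∏ j, x j (f j))

/-- A product vector: a (necessarily nonzero) elementary tensor of nonzero vectors. -/
def IsProdVec {m : ℕ} {d : Fin m → ℕ} (y : EuclideanSpace ℂ (∀ j, Fin (d j))) : Prop :=
  ∃ z : ∀ j, EuclideanSpace ℂ (Fin (d j)), (∀ j, z j ≠ 0) ∧ y = elemTensor z

/-- Rewriting a product after updating one coordinate. -/
lemma prod_update_aux {m : ℕ} {d : Fin m → ℕ} (x : ∀ j, EuclideanSpace ℂ (Fin (d j)))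
    (s : Finset (Fin m)) (j : Fin m) (hj : j ∈ s) (g : ∀ l, Fin (d l)) (a : Fin (d j)) :
    ∏ l ∈ s, x l (Function.update g j a l) = x j a * ∏ l ∈ s.erase j, x l (g l) := by
  rw [← Finset.mul_prod_erase s _ hj]
  congr 1
  · rw [Function.update_self]
  · exact Finset.prod_congr rfl fun l hl => by
      rw [Function.update_of_ne (Finset.ne_of_mem_erase hl)]

/-- If two partial elementary tensors are proportional (as coordinate products),
then each factor of the first is a nonzero multiple of the second's. -/
lemma factor_prop {m : ℕ} {d : Fin m → ℕ} (s : Finset (Fin m))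
    (u v : ∀ j, EuclideanSpace ℂ (Fin (d j))) (hu : ∀ j, u j ≠ 0) (c : ℂ)
    (H : ∀ g : ∀ l, Fin (d l), ∏ l ∈ s, u l (g l) = c * ∏ l ∈ s, v l (g l)) :
    ∀ k ∈ s, ∃ t : ℂ, t ≠ 0 ∧ u k = t • v k := by
  intro k hk
  have hex : ∀ l, ∃ i, u l i ≠ 0 := by
    intro l
    by_contra hc
    push_neg at hc
    exact hu l (PiLp.ext fun i => by rw [hc i]; rfl)
  set g : ∀ l, Fin (d l) := fun l => (hex l).choose with hg
  have hgne : ∀ l, u l (g l) ≠ 0 := fun l => (hex l).choose_spec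
  set A := ∏ l ∈ s.erase k, u l (g l) with hA
  set B := ∏ l ∈ s.erase k, v l (g l) with hB
  have hAne : A ≠ 0 := Finset.prod_ne_zero_iff.2 fun l _ => hgne l
  have key : ∀ a : Fin (d k), u k a * A = c * (v k a * B) := by
    intro a
    have := H (Function.update g k a)
    rwa [prod_update_aux u s k hk g a, prod_update_aux v s k hk g a] at this
  have huk : u k = (c * B / A) • v k := by
    ext a
    have := key a
    show u k a = (c * B / A) * v k a
    field_simp
    linear_combination this
  refine ⟨c * B / A, fun ht => hu k ?_, huk⟩
  rw [huk, ht, zero_smul]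

/-- If a nontrivial linear combination of two product vectors is zero or a product
vector, then their factors are linearly independent in at most one subsystem. -/
theorem stmt9 (m : ℕ) (d : Fin m → ℕ)
    (x₁ x₂ : ∀ j, EuclideanSpace ℂ (Fin (d j)))
    (h₁ : ∀ j, x₁ j ≠ 0) (h₂ : ∀ j, x₂ j ≠ 0)
    (α₁ α₂ : ℂ) (hα₁ : α₁ ≠ 0) (hα₂ : α₂ ≠ 0)
    (h : α₁ • elemTensor x₁ + α₂ • elemTensor x₂ = 0 ∨
      IsProdVec (α₁ • elemTensor x₁ + α₂ • elemTensor x₂)) :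
    ∀ j k, LinearIndependent ℂ ![x₁ j, x₂ j] → LinearIndependent ℂ ![x₁ k, x₂ k] →
      j = k := by
  intro j k hj hk
  by_contra hjk
  have hj' := LinearIndependent.pair_iff.1 hj
  have hk' := LinearIndependent.pair_iff.1 hk
  have hex₁ : ∀ l, ∃ i, x₁ l i ≠ 0 := by
    intro l; by_contra hc; push_neg at hc; exact h₁ l (PiLp.ext fun i => by rw [hc i]; rfl)
  have hex₂ : ∀ l, ∃ i, x₂ l i ≠ 0 := by
    intro l; by_contra hc; push_neg at hc; exact h₂ l (PiLp.ext fun i => by rw [hc i]; rfl)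
  rcases h with h0 | ⟨z, hz, heq⟩
  · -- zero case: the two elementary tensors are proportional
    have H : ∀ f : ∀ l, Fin (d l), ∏ l, x₁ l (f l) = (-α₂ / α₁) * ∏ l, x₂ l (f l) := by
      intro f
      have e := congrArg (fun v => v f) h0
      simp only [PiLp.add_apply, PiLp.smul_apply, smul_eq_mul, elemTensor, PiLp.toLp_apply,
        PiLp.zero_apply] at e
      field_simp
      linear_combination e
    obtain ⟨t, ht, hxt⟩ := factor_prop Finset.univ x₁ x₂ h₁ _
      (fun g => H g) j (Finset.mem_univ j)
    have : (1 : ℂ) • x₁ j + (-t) • x₂ j = 0 := by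
      rw [hxt]; module
    exact one_ne_zero ((hj' 1 (-t) this).1)
  · -- product case
    have H : ∀ f : ∀ l, Fin (d l),
        α₁ * ∏ l, x₁ l (f l) + α₂ * ∏ l, x₂ l (f l) = ∏ l, z l (f l) := by
      intro f
      have e := congrArg (fun v => v f) heq
      simpa only [PiLp.add_apply, PiLp.smul_apply, smul_eq_mul, elemTensor, PiLp.toLp_apply] using e
    set s : Finset (Fin m) := Finset.univ.erase j with hs
    set P₁ : (∀ l, Fin (d l)) → ℂ := fun g => ∏ l ∈ s, x₁ l (g l) with hP₁
    set P₂ : (∀ l, Fin (d l)) → ℂ := fun g => ∏ l ∈ s, x₂ l (g l) with hP₂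
    set Q : (∀ l, Fin (d l)) → ℂ := fun g => ∏ l ∈ s, z l (g l) with hQ
    have key : ∀ (g : ∀ l, Fin (d l)) (a : Fin (d j)),
        α₁ * P₁ g * x₁ j a + α₂ * P₂ g * x₂ j a = Q g * z j a := by
      intro g a
      have := H (Function.update g j a)
      rw [prod_update_aux x₁ Finset.univ j (Finset.mem_univ j) g a,
        prod_update_aux x₂ Finset.univ j (Finset.mem_univ j) g a,
        prod_update_aux z Finset.univ j (Finset.mem_univ j) g a] at this
      simp only [hs, hP₁, hP₂, hQ]
      linear_combination this
    -- base points
    set g₀ : ∀ l, Fin (d l) := fun l => (hex₁ l).choose with hg₀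
    set g₁ : ∀ l, Fin (d l) := fun l => (hex₂ l).choose with hg₁
    have hP₁g₀ : P₁ g₀ ≠ 0 :=
      Finset.prod_ne_zero_iff.2 fun l _ => (hex₁ l).choose_spec
    have hP₂g₁ : P₂ g₁ ≠ 0 :=
      Finset.prod_ne_zero_iff.2 fun l _ => (hex₂ l).choose_spec
    -- Q g₀ ≠ 0
    have hQ₀ : Q g₀ ≠ 0 := by
      intro hQ0
      have hv : (α₁ * P₁ g₀) • x₁ j + (α₂ * P₂ g₀) • x₂ j = 0 := by
        ext a
        have := key g₀ a
        rw [hQ0] at this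
        show α₁ * P₁ g₀ * x₁ j a + α₂ * P₂ g₀ * x₂ j a = 0
        linear_combination this
      have := (hj' _ _ hv).1
      exact mul_ne_zero hα₁ hP₁g₀ this
    set c₁ : ℂ := α₁ * P₁ g₀ / Q g₀ with hc₁
    set c₂ : ℂ := α₂ * P₂ g₀ / Q g₀ with hc₂
    have hc₁ne : c₁ ≠ 0 := div_ne_zero (mul_ne_zero hα₁ hP₁g₀) hQ₀
    -- z j coordinates
    have hzj : ∀ a, Q g₀ * z j a = α₁ * P₁ g₀ * x₁ j a + α₂ * P₂ g₀ * x₂ j a :=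
      fun a => (key g₀ a).symm
    -- coefficient matching for arbitrary g
    have coeff : ∀ g, α₁ * P₁ g = c₁ * Q g ∧ α₂ * P₂ g = c₂ * Q g := by
      intro g
      have hv : (α₁ * P₁ g - c₁ * Q g) • x₁ j + (α₂ * P₂ g - c₂ * Q g) • x₂ j = 0 := by
        ext a
        show (α₁ * P₁ g - c₁ * Q g) * x₁ j a + (α₂ * P₂ g - c₂ * Q g) * x₂ j a = 0
        have e1 := key g a
        have e2 := hzj a
        rw [hc₁, hc₂]
        field_simp
        linear_combination Q g₀ * e1 + Q g * e2
      have := hj' _ _ hv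
      constructor
      · linear_combination this.1
      · linear_combination this.2
    have hc₂ne : c₂ ≠ 0 := by
      intro hc0
      have := (coeff g₁).2
      rw [hc0, zero_mul] at this
      exact mul_ne_zero hα₂ hP₂g₁ this
    -- proportionality of the k-th factors with z k
    have hks : k ∈ s := Finset.mem_erase.2 ⟨fun hkj => hjk hkj.symm, Finset.mem_univ k⟩
    have H₁ : ∀ g : ∀ l, Fin (d l), ∏ l ∈ s, x₁ l (g l) = (c₁ / α₁) * ∏ l ∈ s, z l (g l) := by
      intro g
      have := (coeff g).1
      field_simp
      linear_combination this
    have H₂ : ∀ g : ∀ l, Fin (d l), ∏ l ∈ s, x₂ l (g l) = (c₂ / α₂) * ∏ l ∈ s, z l (g l) := by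
      intro g
      have := (coeff g).2
      field_simp
      linear_combination this
    obtain ⟨t₁, ht₁, hxt₁⟩ := factor_prop s x₁ z h₁ _ H₁ k hks
    obtain ⟨t₂, ht₂, hxt₂⟩ := factor_prop s x₂ z h₂ _ H₂ k hks
    have hrel : (1 : ℂ) • x₁ k + (-(t₁ / t₂)) • x₂ k = 0 := by
      ext a
      have e1 : x₁ k a = t₁ * z k a := congrArg (fun v => v a) hxt₁
      have e2 : x₂ k a = t₂ * z k a := congrArg (fun v => v a) hxt₂
      show 1 * x₁ k a + (-(t₁ / t₂)) * x₂ k a = 0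
      field_simp
      linear_combination t₂ * e1 - t₁ * e2
    exact one_ne_zero ((hk' _ _ hrel).1)
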